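/- Let N ≥ 2 and let A_j, B_j, C_j ∈ ℂ for j = 1,…,N−1. Suppose x_0, x_1, …, x_N ∈ ℂ satisfy x_0 = 1 and C_j x_{j−1} + B_j x_j + A_j x_{j+1} = 0 for all j = 1,…,N−1. Then (∏_{j=1}^{N−1} A_j) · x_N = Σ_{t ∈ 𝒜_N} s_0(t) · ∏_{j=1}^{N−1} v_j(t), where s_0(t) = 1 if t_1 = c and s_0(t) = x_1 if t_1 ∈ {a,b}; equivalently, (∏_{j=1}^{N−1} A_j) · x_N = D¹_N · x_1 + D²_N. -/

import Mathlib

/-- Labels `a`, `b`, `c` for the sequences in the collection `𝒜_N`. -/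
inductive Label where
  | a : Label
  | b : Label
  | c : Label
deriving DecidableEq

instance : Fintype Label :=
  ⟨{Label.a, Label.b, Label.c}, fun x => by cases x <;> simp⟩

/-- A sequence `t = (t_1, …, t_n)` (indexed here by `Fin n`, index `i` standing for
`j = i + 1`) is admissible iff `t_{N-1} ∈ {b, c}` (i.e. the last label is not `a`)
and, for `2 ≤ j ≤ N-1`: if `t_j = c` then `t_{j-1} = a`, while if `t_j ∈ {a, b}`
then `t_{j-1} ∈ {b, c}`.  Here `n = N - 1`. -/
def Admissible {n : ℕ} (t : Fin n → Label) : Prop :=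
  (∀ h : 0 < n, t ⟨n - 1, by omega⟩ ≠ Label.a) ∧
  ∀ j : ℕ, ∀ h : j + 1 < n,
    (t ⟨j + 1, h⟩ = Label.c → t ⟨j, by omega⟩ = Label.a) ∧
    (t ⟨j + 1, h⟩ ≠ Label.c → t ⟨j, by omega⟩ ≠ Label.a)

/-- The collection `𝒜_N` (with `n = N - 1` labels per sequence). -/
noncomputable def AdmSet (n : ℕ) : Finset (Fin n → Label) :=
  haveI := Classical.decPred (Admissible (n := n))
  Finset.univ.filter Admissible

/-- The value `v_j(t)` of the `j`-th label of `t`: `A_j` if `t_j = a`, `-B_j` if `t_j = b`,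
`-C_j` if `t_j = c`.  The functions `A B C : ℕ → ℂ` are read at the 1-based index `j = i+1`. -/
def labelVal {n : ℕ} (A B C : ℕ → ℂ) (t : Fin n → Label) (j : Fin n) : ℂ :=
  match t j with
  | Label.a => A (j.val + 1)
  | Label.b => -B (j.val + 1)
  | Label.c => -C (j.val + 1)

/-- `D¹_N = Σ_{t ∈ 𝒜_N, t_1 ≠ c} ∏_{j=1}^{N-1} v_j(t)`, with `n = N - 1`. -/
noncomputable def D1 (n : ℕ) (A B C : ℕ → ℂ) : ℂ :=
  haveI : DecidablePred fun t : Fin n → Label => ∀ h : 0 < n, t ⟨0, h⟩ ≠ Label.c :=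
    Classical.decPred _
  ∑ t ∈ (AdmSet n).filter (fun t => ∀ h : 0 < n, t ⟨0, h⟩ ≠ Label.c),
    ∏ j, labelVal A B C t j

/-- `D²_N = Σ_{t ∈ 𝒜_N, t_1 = c} ∏_{j=1}^{N-1} v_j(t)`, with `n = N - 1`. -/
noncomputable def D2 (n : ℕ) (A B C : ℕ → ℂ) : ℂ :=
  haveI : DecidablePred fun t : Fin n → Label => ∀ h : 0 < n, t ⟨0, h⟩ = Label.c :=
    Classical.decPred _
  ∑ t ∈ (AdmSet n).filter (fun t => ∀ h : 0 < n, t ⟨0, h⟩ = Label.c),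
    ∏ j, labelVal A B C t j

/-! ### Auxiliary machinery -/

section Aux

open scoped Classical

/-- Sum over the three labels. -/
lemma sum_label (g : Label → ℂ) : ∑ l, g l = g .a + g .b + g .c := by
  rw [show (Finset.univ : Finset Label) = {.a, .b, .c} by decide]
  simp [Finset.sum_insert, Finset.mem_insert]
  ring

/-- Summing over tuples of length `n+1` by splitting off the last entry. -/
lemma sum_snoc {n : ℕ} (F : (Fin (n+1) → Label) → ℂ) :
    ∑ t, F t = ∑ t : Fin n → Label,
      (F (Fin.snoc t .a) + F (Fin.snoc t .b) + F (Fin.snoc t .c)) := by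
  rw [← Equiv.sum_comp (Fin.snocEquiv (fun _ => Label)) F, Fintype.sum_prod_type]
  rw [sum_label]
  rw [← Finset.sum_add_distrib, ← Finset.sum_add_distrib]
  simp [Fin.snocEquiv]

/-- The "inner" part of admissibility (conditions between consecutive labels). -/
def InnerAdm {n : ℕ} (t : Fin n → Label) : Prop :=
  ∀ j : ℕ, ∀ h : j + 1 < n,
    (t ⟨j + 1, h⟩ = Label.c → t ⟨j, by omega⟩ = Label.a) ∧
    (t ⟨j + 1, h⟩ ≠ Label.c → t ⟨j, by omega⟩ ≠ Label.a)

def Compat (l m : Label) : Prop :=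
  (l = Label.c → m = Label.a) ∧ (l ≠ Label.c → m ≠ Label.a)

lemma snoc_mk {n : ℕ} (t : Fin n → Label) (l : Label) (i : ℕ) (h : i < n + 1) :
    (Fin.snoc t l : Fin (n+1) → Label) ⟨i, h⟩ = if h' : i < n then t ⟨i, h'⟩ else l := by
  split
  · next h' =>
    have e : (⟨i, h⟩ : Fin (n+1)) = Fin.castSucc ⟨i, h'⟩ := rfl
    rw [e, Fin.snoc_castSucc]
  · next h' =>
    have e : (⟨i, h⟩ : Fin (n+1)) = Fin.last n := by
      ext; simp; omega
    rw [e, Fin.snoc_last]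

lemma inner_snoc {n : ℕ} (t : Fin n → Label) (l : Label) :
    InnerAdm (Fin.snoc t l) ↔ InnerAdm t ∧ ∀ h : 0 < n, Compat l (t ⟨n - 1, by omega⟩) := by
  constructor
  · intro H
    refine ⟨fun j h => ?_, fun h => ?_⟩
    · have := H j (by omega)
      rwa [snoc_mk, snoc_mk, dif_pos h, dif_pos (by omega : j < n)] at this
    · have := H (n - 1) (by omega)
      rw [snoc_mk, snoc_mk] at this
      rw [dif_neg (by omega : ¬ n - 1 + 1 < n), dif_pos (by omega : n - 1 < n)] at this
      exact this
  · rintro ⟨H1, H2⟩ j h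
    rw [snoc_mk, snoc_mk, dif_pos (by omega : j < n)]
    by_cases h' : j + 1 < n
    · rw [dif_pos h']
      exact H1 j h'
    · rw [dif_neg h']
      have hj : j = n - 1 := by omega
      subst hj
      exact H2 (by omega)

lemma adm_snoc {n : ℕ} (t : Fin n → Label) (l : Label) :
    Admissible (Fin.snoc t l) ↔ l ≠ Label.a ∧ InnerAdm (Fin.snoc t l) := by
  unfold Admissible
  constructor
  · rintro ⟨h1, h2⟩
    refine ⟨?_, h2⟩
    have := h1 (by omega)
    rwa [snoc_mk, dif_neg (by omega : ¬ (n + 1 - 1 < n))] at this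
  · rintro ⟨h1, h2⟩
    refine ⟨fun _ => ?_, h2⟩
    rwa [snoc_mk, dif_neg (by omega : ¬ (n + 1 - 1 < n))]

lemma adm_iff {n : ℕ} (t : Fin n → Label) :
    Admissible t ↔ (∀ h : 0 < n, t ⟨n - 1, by omega⟩ ≠ Label.a) ∧ InnerAdm t := Iff.rfl

lemma adm_snoc_a {n : ℕ} (t : Fin n → Label) : ¬ Admissible (Fin.snoc t Label.a) := by
  rw [adm_snoc]; simp

lemma adm_snoc_b {n : ℕ} (t : Fin n → Label) :
    Admissible (Fin.snoc t Label.b) ↔ Admissible t := by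
  rw [adm_snoc, inner_snoc, adm_iff]
  simp [Compat]
  tauto

lemma adm_snoc_c {n : ℕ} (t : Fin n → Label) :
    Admissible (Fin.snoc t Label.c) ↔ InnerAdm t ∧ ∀ h : 0 < n, t ⟨n - 1, by omega⟩ = Label.a := by
  rw [adm_snoc, inner_snoc]
  simp [Compat]

lemma adm_snoc_snoc_c {n : ℕ} (u : Fin n → Label) (m : Label) :
    Admissible (Fin.snoc (Fin.snoc u m) Label.c) ↔ m = Label.a ∧ Admissible u := by
  rw [adm_snoc_c, inner_snoc, adm_iff]
  have : (Fin.snoc u m : Fin (n+1) → Label) ⟨n + 1 - 1, by omega⟩ = m := by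
    rw [snoc_mk, dif_neg (by omega : ¬ n + 1 - 1 < n)]
  simp only [this]
  constructor
  · rintro ⟨⟨hi, hc⟩, hm⟩
    have hm' := hm (by omega)
    refine ⟨hm', ?_, hi⟩
    intro h
    have := (hc h).2
    simp [hm'] at this
    exact this
  · rintro ⟨hm, hlast, hi⟩
    subst hm
    exact ⟨⟨hi, fun h => ⟨by simp, fun _ => hlast h⟩⟩, fun _ => rfl⟩

/-- The initial factor `s₀(t)`. -/
def s0val (x1 : ℂ) {n : ℕ} (t : Fin n → Label) : ℂ :=
  if h : 0 < n then (if t ⟨0, h⟩ = Label.c then 1 else x1) else x1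

/-- The weighted sum over admissible sequences. -/
noncomputable def Ssum (x1 : ℂ) (A B C : ℕ → ℂ) (n : ℕ) : ℂ :=
  ∑ t ∈ AdmSet n, s0val x1 t * ∏ j, labelVal A B C t j

def valAt (A B C : ℕ → ℂ) (l : Label) (k : ℕ) : ℂ :=
  match l with
  | .a => A k
  | .b => -B k
  | .c => -C k

lemma labelVal_snoc_castSucc {n : ℕ} (A B C : ℕ → ℂ) (t : Fin n → Label) (l : Label)
    (j : Fin n) :
    labelVal A B C (Fin.snoc t l) j.castSucc = labelVal A B C t j := by
  simp [labelVal, Fin.snoc_castSucc]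

lemma prod_snoc {n : ℕ} (A B C : ℕ → ℂ) (t : Fin n → Label) (l : Label) :
    ∏ j : Fin (n+1), labelVal A B C (Fin.snoc t l) j
      = (∏ j : Fin n, labelVal A B C t j) * valAt A B C l (n+1) := by
  rw [Fin.prod_univ_castSucc]
  congr 1
  · exact Finset.prod_congr rfl fun j _ => labelVal_snoc_castSucc A B C t l j
  · show labelVal A B C (Fin.snoc t l) (Fin.last n) = _
    cases l <;> simp [labelVal, Fin.snoc_last, valAt]

lemma s0_snoc_pos {n : ℕ} (x1 : ℂ) (hn : 0 < n) (t : Fin n → Label) (l : Label) :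
    s0val x1 (Fin.snoc t l) = s0val x1 t := by
  unfold s0val
  rw [dif_pos (by omega : (0:ℕ) < n + 1), dif_pos hn, snoc_mk, dif_pos hn]

lemma s0_snoc_a {n : ℕ} (x1 : ℂ) (t : Fin n → Label) :
    s0val x1 (Fin.snoc t Label.a) = s0val x1 t := by
  rcases Nat.eq_zero_or_pos n with hn | hn
  · subst hn
    unfold s0val
    rw [dif_pos (by omega : (0:ℕ) < 1), snoc_mk, dif_neg (by omega : ¬ (0:ℕ) < 0)]
    simp
  · exact s0_snoc_pos x1 hn t Label.a

lemma Ssum_eq_sum (x1 : ℂ) (A B C : ℕ → ℂ) (n : ℕ) :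
    Ssum x1 A B C n = ∑ t : Fin n → Label,
      if Admissible t then s0val x1 t * ∏ j, labelVal A B C t j else 0 := by
  classical
  unfold Ssum AdmSet
  rw [Finset.sum_filter]

lemma Ssum_zero (x1 : ℂ) (A B C : ℕ → ℂ) : Ssum x1 A B C 0 = x1 := by
  have hadm : ∀ t : Fin 0 → Label, Admissible t :=
    fun t => ⟨fun h => absurd h (by omega), fun j h => absurd h (by omega)⟩
  rw [Ssum_eq_sum]
  rw [Fintype.sum_unique]
  simp [hadm, s0val]

lemma Ssum_one (x1 : ℂ) (A B C : ℕ → ℂ) :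
    Ssum x1 A B C 1 = x1 * (-B 1) + (-C 1) := by
  rw [Ssum_eq_sum, sum_snoc, Fintype.sum_unique]
  have hadm : ∀ t : Fin 0 → Label, Admissible t :=
    fun t => ⟨fun h => absurd h (by omega), fun j h => absurd h (by omega)⟩
  have hinner : ∀ t : Fin 0 → Label, InnerAdm t :=
    fun t j h => absurd h (by omega)
  have hs0 : ∀ l : Label, s0val x1 (Fin.snoc (default : Fin 0 → Label) l)
      = if l = Label.c then 1 else x1 := by
    intro l
    unfold s0val
    rw [dif_pos (by omega : (0:ℕ) < 1), snoc_mk, dif_neg (by omega : ¬ (0:ℕ) < 0)]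
  rw [if_neg (adm_snoc_a _), if_pos ((adm_snoc_b _).2 (hadm _)),
    if_pos ((adm_snoc_c _).2 ⟨hinner _, fun h => absurd h (by omega)⟩)]
  rw [prod_snoc, prod_snoc, hs0, hs0]
  simp [valAt]

lemma Ssum_rec (x1 : ℂ) (A B C : ℕ → ℂ) (n : ℕ) :
    Ssum x1 A B C (n+2) = (-B (n+2)) * Ssum x1 A B C (n+1)
      + (-C (n+2)) * A (n+1) * Ssum x1 A B C n := by
  classical
  rw [Ssum_eq_sum, sum_snoc, Finset.sum_add_distrib, Finset.sum_add_distrib]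
  have term_a : ∀ {m : ℕ} (t : Fin (m+1) → Label),
      (if Admissible (Fin.snoc t Label.a) then
        s0val x1 (Fin.snoc t Label.a) * ∏ j, labelVal A B C (Fin.snoc t Label.a) j else 0) = 0 :=
    fun t => if_neg (adm_snoc_a t)
  have sum_b : ∑ t : Fin (n+1) → Label,
      (if Admissible (Fin.snoc t Label.b) then
        s0val x1 (Fin.snoc t Label.b) * ∏ j, labelVal A B C (Fin.snoc t Label.b) j else 0)
      = (-B (n+2)) * Ssum x1 A B C (n+1) := by
    rw [Ssum_eq_sum, Finset.mul_sum]
    refine Finset.sum_congr rfl fun t _ => ?_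
    by_cases h : Admissible t
    · rw [if_pos ((adm_snoc_b t).2 h), if_pos h, prod_snoc,
        s0_snoc_pos x1 (by omega) t Label.b]
      show _ * (_ * (-B (n+1+1))) = _
      ring
    · rw [if_neg (fun hc => h ((adm_snoc_b t).1 hc)), if_neg h, mul_zero]
  have sum_c : ∑ t : Fin (n+1) → Label,
      (if Admissible (Fin.snoc t Label.c) then
        s0val x1 (Fin.snoc t Label.c) * ∏ j, labelVal A B C (Fin.snoc t Label.c) j else 0)
      = (-C (n+2)) * A (n+1) * Ssum x1 A B C n := by
    rw [sum_snoc (fun t => if Admissible (Fin.snoc t Label.c) then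
        s0val x1 (Fin.snoc t Label.c) * ∏ j, labelVal A B C (Fin.snoc t Label.c) j else 0)]
    rw [Ssum_eq_sum, Finset.mul_sum]
    refine Finset.sum_congr rfl fun u _ => ?_
    have hb : ¬ Admissible (Fin.snoc (Fin.snoc u Label.b) Label.c) := by
      rw [adm_snoc_snoc_c]; simp
    have hc : ¬ Admissible (Fin.snoc (Fin.snoc u Label.c) Label.c) := by
      rw [adm_snoc_snoc_c]; simp
    rw [if_neg hb, if_neg hc, add_zero, add_zero]
    by_cases h : Admissible u
    · rw [if_pos ((adm_snoc_snoc_c u Label.a).2 ⟨rfl, h⟩), if_pos h]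
      rw [prod_snoc, prod_snoc, s0_snoc_pos x1 (by omega), s0_snoc_a]
      simp only [valAt]
      ring
    · rw [if_neg (fun hcc => h ((adm_snoc_snoc_c u Label.a).1 hcc).2), if_neg h, mul_zero]
  have za : ∑ t : Fin (n+1) → Label,
      (if Admissible (Fin.snoc t Label.a) then
        s0val x1 (Fin.snoc t Label.a) * ∏ j, labelVal A B C (Fin.snoc t Label.a) j else 0) = 0 :=
    Finset.sum_eq_zero fun t _ => term_a t
  rw [za, sum_b, sum_c, zero_add]

lemma Ssum_eq_D (x1 : ℂ) (A B C : ℕ → ℂ) (n : ℕ) (hn : 0 < n) :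
    Ssum x1 A B C n = D1 n A B C * x1 + D2 n A B C := by
  classical
  have split := Finset.sum_filter_add_sum_filter_not (AdmSet n)
    (fun t => ∀ h : 0 < n, t ⟨0, h⟩ = Label.c)
    (fun t => s0val x1 t * ∏ j, labelVal A B C t j)
  rw [Ssum, ← split]
  have e2 : ∑ t ∈ (AdmSet n).filter (fun t => ∀ h : 0 < n, t ⟨0, h⟩ = Label.c),
      s0val x1 t * ∏ j, labelVal A B C t j = D2 n A B C := by
    rw [D2]
    refine Finset.sum_congr (by congr) fun t ht => ?_
    have ht2 : ∀ h : 0 < n, t ⟨0, h⟩ = Label.c := (Finset.mem_filter.1 ht).2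
    unfold s0val
    rw [dif_pos hn, if_pos (ht2 hn), one_mul]
  have e1 : ∑ t ∈ (AdmSet n).filter
      (fun t => ¬ ∀ h : 0 < n, t ⟨0, h⟩ = Label.c),
      s0val x1 t * ∏ j, labelVal A B C t j = D1 n A B C * x1 := by
    rw [D1, Finset.sum_mul]
    have hfilt : (AdmSet n).filter (fun t => ¬ ∀ h : 0 < n, t ⟨0, h⟩ = Label.c)
        = (AdmSet n).filter (fun t => ∀ h : 0 < n, t ⟨0, h⟩ ≠ Label.c) := by
      refine Finset.filter_congr fun t _ => ?_
      simp [hn]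
    rw [hfilt]
    refine Finset.sum_congr (by congr) fun t ht => ?_
    have ht2 : ∀ h : 0 < n, t ⟨0, h⟩ ≠ Label.c := (Finset.mem_filter.1 ht).2
    unfold s0val
    rw [dif_pos hn, if_neg (ht2 hn)]
    ring
  rw [e1, e2, add_comm]

lemma Ssum_main (N : ℕ) (A B C : ℕ → ℂ) (x : ℕ → ℂ) (hx0 : x 0 = 1)
    (hrec : ∀ j, 1 ≤ j → j ≤ N - 1 →
      C j * x (j - 1) + B j * x j + A j * x (j + 1) = 0) :
    ∀ n, n ≤ N - 1 → Ssum (x 1) A B C n = (∏ j ∈ Finset.Icc 1 n, A j) * x (n + 1) := by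
  intro n
  induction n using Nat.strong_induction_on with
  | _ n ih =>
    match n, ih with
    | 0, _ =>
      intro _
      simp [Ssum_zero]
    | 1, _ =>
      intro h1
      rw [Ssum_one, Finset.Icc_self, Finset.prod_singleton]
      have h := hrec 1 le_rfl h1
      norm_num at h
      linear_combination -h + C 1 * hx0
    | (m+2), ih =>
      intro hm
      rw [Ssum_rec, ih (m+1) (by omega) (by omega), ih m (by omega) (by omega),
        show m + 2 = (m+1) + 1 from rfl,
        Finset.prod_Icc_succ_top (by omega : 1 ≤ m + 1 + 1),
        Finset.prod_Icc_succ_top (by omega : 1 ≤ m + 1)]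
      have h := hrec (m+2) (by omega) hm
      have hidx : m + 2 - 1 = m + 1 := rfl
      rw [hidx] at h
      linear_combination (-(∏ j ∈ Finset.Icc 1 m, A j)) * A (m+1) * h

end Aux

/-- If `x_0 = 1` and `C_j x_{j-1} + B_j x_j + A_j x_{j+1} = 0` for `j = 1, …, N-1`, then
`(∏_{j=1}^{N-1} A_j) x_N = Σ_{t ∈ 𝒜_N} s_0(t) ∏_j v_j(t)`, where `s_0(t) = 1` if `t_1 = c`
and `s_0(t) = x_1` otherwise; equivalently, `(∏_{j=1}^{N-1} A_j) x_N = D¹_N x_1 + D²_N`. -/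
theorem stmt0 (N : ℕ) (hN : 2 ≤ N) (A B C : ℕ → ℂ) (x : ℕ → ℂ)
    (hx0 : x 0 = 1)
    (hrec : ∀ j, 1 ≤ j → j ≤ N - 1 →
      C j * x (j - 1) + B j * x j + A j * x (j + 1) = 0) :
    ((∏ j ∈ Finset.Icc 1 (N - 1), A j) * x N =
      ∑ t ∈ AdmSet (N - 1),
        (if t ⟨0, by omega⟩ = Label.c then (1 : ℂ) else x 1) *
          ∏ j, labelVal A B C t j) ∧
    (∏ j ∈ Finset.Icc 1 (N - 1), A j) * x N =
      D1 (N - 1) A B C * x 1 + D2 (N - 1) A B C := by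
  have hn : 0 < N - 1 := by omega
  have hmain := Ssum_main N A B C x hx0 hrec (N - 1) le_rfl
  have hxN : N - 1 + 1 = N := by omega
  rw [hxN] at hmain
  constructor
  · rw [← hmain, Ssum]
    refine Finset.sum_congr rfl fun t _ => ?_
    unfold s0val
    rw [dif_pos hn]
  · rw [← hmain, Ssum_eq_D _ _ _ _ _ hn]
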